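/- (Corollary of Borisov's theorem) There is no set G of functions from ℝ⁴ to ℝ⁴ that forms a group under composition and satisfies Triv↑ ⊊ G ⊊ Poi↑. -/

import Mathlib

/-- Spacetime points: elements of ℝ⁴. -/
abbrev Pt : Type := Fin 4 → ℝ

/-- Lightlike relatedness λ. -/
def lightlike (p q : Pt) : Prop :=
  (p 0 - q 0) ^ 2 = (p 1 - q 1) ^ 2 + (p 2 - q 2) ^ 2 + (p 3 - q 3) ^ 2

/-- Absolute simultaneity S. -/
def simul (p q : Pt) : Prop := p 0 = q 0

/-- Squared Minkowski length. -/
def sqMink (p : Pt) : ℝ := p 0 ^ 2 - p 1 ^ 2 - p 2 ^ 2 - p 3 ^ 2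

/-- Squared Euclidean length. -/
def sqEucl (p : Pt) : ℝ := p 0 ^ 2 + p 1 ^ 2 + p 2 ^ 2 + p 3 ^ 2

/-- Translations of ℝ⁴. -/
def IsTranslation (τ : Pt → Pt) : Prop := ∃ b : Pt, ∀ p, τ p = p + b

/-- Lorentz transformations: bijective linear maps preserving squared Minkowski length. -/
def IsLorentz (L : Pt → Pt) : Prop :=
  IsLinearMap ℝ L ∧ Function.Bijective L ∧ ∀ p, sqMink (L p) = sqMink p

/-- Poincaré transformations: translations composed with Lorentz transformations. -/
def IsPoincare (P : Pt → Pt) : Prop :=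
  ∃ τ L, IsTranslation τ ∧ IsLorentz L ∧ P = τ ∘ L

/-- Euclidean isometries: translations composed with bijective linear maps preserving
squared Euclidean length. -/
def IsEuclIsom (A : Pt → Pt) : Prop :=
  ∃ τ L, IsTranslation τ ∧ IsLinearMap ℝ L ∧ Function.Bijective L ∧
    (∀ p, sqEucl (L p) = sqEucl p) ∧ A = τ ∘ L

/-- Vertical lines: lines parallel to the time axis. -/
def IsVerticalLine (ℓ : Set Pt) : Prop :=
  ∃ q : Pt, ℓ = {p | p 1 = q 1 ∧ p 2 = q 2 ∧ p 3 = q 3}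

/-- Trivial transformations: Euclidean isometries taking vertical lines to vertical lines. -/
def IsTrivial (A : Pt → Pt) : Prop :=
  IsEuclIsom A ∧ ∀ ℓ, IsVerticalLine ℓ → IsVerticalLine (A '' ℓ)

/-- Scalings: maps `p ↦ a • p` with `a ≠ 0`. -/
def IsScaling (D : Pt → Pt) : Prop := ∃ a : ℝ, a ≠ 0 ∧ ∀ p, D p = a • p

/-- The point (1,0,0,0). -/
def unitTime : Pt := fun i => if i = 0 then 1 else 0

/-- Orthochronous maps: maps not changing the direction of time. -/
def Orthochronous (A : Pt → Pt) : Prop := A unitTime 0 > A 0 0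

/-- The set of Poincaré transformations. -/
def Poi : Set (Pt → Pt) := {P | IsPoincare P}

/-- The set of orthochronous Poincaré transformations. -/
def PoiUp : Set (Pt → Pt) := {P | IsPoincare P ∧ Orthochronous P}

/-- The set of trivial transformations. -/
def Triv : Set (Pt → Pt) := {T | IsTrivial T}

/-- The set of orthochronous trivial transformations. -/
def TrivUp : Set (Pt → Pt) := {T | IsTrivial T ∧ Orthochronous T}

/-- The set of scalings. -/
def Scal : Set (Pt → Pt) := {D | IsScaling D}

/-- Composition of two sets of functions: `H ∘ G = {h ∘ g : h ∈ H, g ∈ G}`. -/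
def setComp (H G : Set (Pt → Pt)) : Set (Pt → Pt) := {f | ∃ h ∈ H, ∃ g ∈ G, f = h ∘ g}

/-- A set of functions forms a group under composition. -/
def IsCompGroup (G : Set (Pt → Pt)) : Prop :=
  id ∈ G ∧ (∀ f ∈ G, ∀ g ∈ G, f ∘ g ∈ G) ∧
    ∀ f ∈ G, ∃ g ∈ G, f ∘ g = id ∧ g ∘ f = id
/-- Spatial dot product. -/
def sdot (p q : Pt) : ℝ := p 1 * q 1 + p 2 * q 2 + p 3 * q 3

lemma sdot_comm (p q : Pt) : sdot p q = sdot q p := by simp [sdot]; ring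

lemma sdot_self_nonneg (p : Pt) : 0 ≤ sdot p p := by
  have := sq_nonneg (p 1); have := sq_nonneg (p 2); have := sq_nonneg (p 3)
  simp only [sdot]; nlinarith

lemma sdot_unitTime (p : Pt) : sdot p unitTime = 0 := by
  simp [sdot, unitTime]

lemma unitTime_sdot (p : Pt) : sdot unitTime p = 0 := by
  simp [sdot, unitTime]

lemma sqMink_eq (p : Pt) : sqMink p = p 0 ^ 2 - sdot p p := by
  simp [sqMink, sdot]; ring

lemma sqEucl_eq (p : Pt) : sqEucl p = p 0 ^ 2 + sdot p p := by
  simp [sqEucl, sdot]; ring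

/-- The Minkowski bilinear form. -/
def mdot (p q : Pt) : ℝ := p 0 * q 0 - sdot p q

lemma mdot_pol (p q : Pt) : mdot p q = (sqMink (p + q) - sqMink p - sqMink q) / 2 := by
  simp [mdot, sqMink, sdot, Pi.add_apply]; ring

lemma mdot_unitTime (p : Pt) : mdot p unitTime = p 0 := by
  simp [mdot, sdot_unitTime, unitTime]

lemma mdot_preserved {L : Pt → Pt} (hlin : IsLinearMap ℝ L)
    (hm : ∀ p, sqMink (L p) = sqMink p) (p q : Pt) : mdot (L p) (L q) = mdot p q := by
  rw [mdot_pol, mdot_pol, ← hlin.map_add, hm, hm, hm]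

/-- Spatial flip (inverse of a boost parameter). -/
noncomputable def xflip (x : Pt) : Pt := fun i => if i = 0 then x 0 else -x i

lemma xflip_zero (x : Pt) : xflip x 0 = x 0 := rfl

lemma xflip_xflip (x : Pt) : xflip (xflip x) = x := by
  funext i; fin_cases i <;> simp [xflip]

lemma sdot_xflip (x y : Pt) : sdot (xflip x) (xflip y) = sdot x y := by
  simp [sdot, xflip]

/-- The boost determined by a unit-hyperbolic vector `x`. -/
noncomputable def boost (x : Pt) (p : Pt) : Pt := fun i =>
  if i = 0 then x 0 * p 0 + sdot x p
  else p i + (p 0 + sdot x p / (1 + x 0)) * x i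

lemma boost_apply_zero (x p : Pt) : boost x p 0 = x 0 * p 0 + sdot x p := rfl

lemma boost_unitTime (x : Pt) : boost x unitTime = x := by
  funext i
  fin_cases i <;> simp [boost, sdot, unitTime]

lemma boost_linear (x : Pt) : IsLinearMap ℝ (boost x) := by
  constructor
  · intro p q; funext i
    fin_cases i <;> simp [boost, sdot, Pi.add_apply] <;> ring
  · intro c p; funext i
    fin_cases i <;> simp [boost, sdot, Pi.smul_apply, smul_eq_mul] <;> ring
lemma boost_apply_one (x p : Pt) :
    boost x p 1 = p 1 + (p 0 + sdot x p / (1 + x 0)) * x 1 := rfl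
lemma boost_apply_two (x p : Pt) :
    boost x p 2 = p 2 + (p 0 + sdot x p / (1 + x 0)) * x 2 := rfl
lemma boost_apply_three (x p : Pt) :
    boost x p 3 = p 3 + (p 0 + sdot x p / (1 + x 0)) * x 3 := rfl
lemma xflip_apply_one (x : Pt) : xflip x 1 = -x 1 := rfl
lemma xflip_apply_two (x : Pt) : xflip x 2 = -x 2 := rfl
lemma xflip_apply_three (x : Pt) : xflip x 3 = -x 3 := rfl

lemma boost_mink {x : Pt} (hx0 : 1 ≤ x 0) (hxs : sdot x x = x 0 ^ 2 - 1) (p : Pt) :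
    sqMink (boost x p) = sqMink p := by
  have h1 : (1 : ℝ) + x 0 ≠ 0 := by linarith
  simp only [sdot] at hxs
  simp only [sqMink, boost_apply_zero, boost_apply_one, boost_apply_two,
    boost_apply_three, sdot]
  field_simp
  linear_combination (-(p 0 * (1 + x 0) + (x 1 * p 1 + x 2 * p 2 + x 3 * p 3)) ^ 2) * hxs
lemma sdot_xflip_left (x q : Pt) : sdot (xflip x) q = -sdot x q := by
  simp [sdot, xflip]; ring

lemma sdot_boost_self (x p : Pt) :
    sdot x (boost x p) = sdot x p + (p 0 + sdot x p / (1 + x 0)) * sdot x x := by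
  simp only [sdot, boost_apply_one, boost_apply_two, boost_apply_three]; ring

lemma boost_xflip_boost {x : Pt} (hx0 : 1 ≤ x 0) (hxs : sdot x x = x 0 ^ 2 - 1) (p : Pt) :
    boost (xflip x) (boost x p) = p := by
  have h1 : (1 : ℝ) + x 0 ≠ 0 := by linarith
  funext i
  fin_cases i
  · show boost (xflip x) (boost x p) 0 = p 0
    rw [boost_apply_zero, sdot_xflip_left, sdot_boost_self, hxs, boost_apply_zero, xflip_zero]
    field_simp; ring
  · show boost (xflip x) (boost x p) 1 = p 1
    rw [boost_apply_one, xflip_apply_one, sdot_xflip_left, sdot_boost_self, hxs, xflip_zero,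
      boost_apply_zero, boost_apply_one]
    field_simp; ring
  · show boost (xflip x) (boost x p) 2 = p 2
    rw [boost_apply_two, xflip_apply_two, sdot_xflip_left, sdot_boost_self, hxs, xflip_zero,
      boost_apply_zero, boost_apply_two]
    field_simp; ring
  · show boost (xflip x) (boost x p) 3 = p 3
    rw [boost_apply_three, xflip_apply_three, sdot_xflip_left, sdot_boost_self, hxs, xflip_zero,
      boost_apply_zero, boost_apply_three]
    field_simp; ring

lemma boost_boost_xflip {x : Pt} (hx0 : 1 ≤ x 0) (hxs : sdot x x = x 0 ^ 2 - 1) (p : Pt) :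
    boost x (boost (xflip x) p) = p := by
  have h0 : xflip x 0 = x 0 := rfl
  have hs : sdot (xflip x) (xflip x) = (xflip x 0) ^ 2 - 1 := by
    rw [sdot_xflip, h0, hxs]
  have := boost_xflip_boost (x := xflip x) (by rw [h0]; exact hx0) hs p
  rwa [xflip_xflip] at this

lemma boost_bijective {x : Pt} (hx0 : 1 ≤ x 0) (hxs : sdot x x = x 0 ^ 2 - 1) :
    Function.Bijective (boost x) :=
  Function.bijective_iff_has_inverse.mpr
    ⟨boost (xflip x), boost_xflip_boost hx0 hxs, boost_boost_xflip hx0 hxs⟩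

lemma boost_lorentz {x : Pt} (hx0 : 1 ≤ x 0) (hxs : sdot x x = x 0 ^ 2 - 1) :
    IsLorentz (boost x) :=
  ⟨boost_linear x, boost_bijective hx0 hxs, boost_mink hx0 hxs⟩
/-- A pair of mutually inverse linear spatial isometries fixing the time coordinate. -/
structure GoodPair (K K' : Pt → Pt) : Prop where
  lin : IsLinearMap ℝ K
  lin' : IsLinearMap ℝ K'
  time : ∀ p, K p 0 = p 0
  dot : ∀ p q, sdot (K p) (K q) = sdot p q
  inv1 : ∀ p, K (K' p) = p
  inv2 : ∀ p, K' (K p) = p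

lemma GoodPair.time' {K K' : Pt → Pt} (h : GoodPair K K') (p : Pt) : K' p 0 = p 0 := by
  conv_rhs => rw [← h.inv1 p]
  rw [h.time]

lemma GoodPair.dot' {K K' : Pt → Pt} (h : GoodPair K K') (p q : Pt) :
    sdot (K' p) (K' q) = sdot p q := by
  conv_rhs => rw [← h.inv1 p, ← h.inv1 q]
  rw [h.dot]

lemma GoodPair.symm {K K' : Pt → Pt} (h : GoodPair K K') : GoodPair K' K :=
  ⟨h.lin', h.lin, h.time', h.dot', h.inv2, h.inv1⟩

lemma GoodPair.fix_unitTime {K K' : Pt → Pt} (h : GoodPair K K') : K unitTime = unitTime := by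
  have hd : sdot (K unitTime) (K unitTime) = 0 := by
    rw [h.dot]; simp [sdot, unitTime]
  simp only [sdot] at hd
  funext i
  fin_cases i
  · show K unitTime 0 = unitTime 0
    rw [h.time]
  · show K unitTime 1 = unitTime 1
    have : unitTime 1 = 0 := rfl
    rw [this]; nlinarith [sq_nonneg (K unitTime 1), sq_nonneg (K unitTime 2), sq_nonneg (K unitTime 3)]
  · show K unitTime 2 = unitTime 2
    have : unitTime 2 = 0 := rfl
    rw [this]; nlinarith [sq_nonneg (K unitTime 1), sq_nonneg (K unitTime 2), sq_nonneg (K unitTime 3)]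
  · show K unitTime 3 = unitTime 3
    have : unitTime 3 = 0 := rfl
    rw [this]; nlinarith [sq_nonneg (K unitTime 1), sq_nonneg (K unitTime 2), sq_nonneg (K unitTime 3)]

/-- Vertical-line membership restated. -/
lemma vert_mem (q p : Pt) :
    (p 1 = q 1 ∧ p 2 = q 2 ∧ p 3 = q 3) ↔ ∃ t : ℝ, p = q + t • unitTime := by
  constructor
  · rintro ⟨h1, h2, h3⟩
    refine ⟨p 0 - q 0, ?_⟩
    funext i
    fin_cases i <;> simp [unitTime, h1, h2, h3]
  · rintro ⟨t, rfl⟩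
    refine ⟨?_, ?_, ?_⟩ <;> simp [unitTime]

/-- A linear map fixing `unitTime` maps vertical lines to vertical lines. -/
lemma vertical_of_fix {K : Pt → Pt} (hlin : IsLinearMap ℝ K) (he : K unitTime = unitTime) :
    ∀ ℓ, IsVerticalLine ℓ → IsVerticalLine (K '' ℓ) := by
  rintro ℓ ⟨q, rfl⟩
  refine ⟨K q, ?_⟩
  ext r
  constructor
  · rintro ⟨p, hp, rfl⟩
    simp only [Set.mem_setOf_eq] at hp ⊢
    rw [vert_mem] at hp ⊢
    obtain ⟨t, rfl⟩ := hp
    exact ⟨t, by rw [hlin.map_add, hlin.map_smul, he]⟩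
  · intro hr
    simp only [Set.mem_setOf_eq] at hr ⊢
    rw [vert_mem] at hr
    obtain ⟨t, rfl⟩ := hr
    refine ⟨q + t • unitTime, ?_, ?_⟩
    · simp only [Set.mem_setOf_eq]
      rw [vert_mem]; exact ⟨t, rfl⟩
    · rw [hlin.map_add, hlin.map_smul, he]

lemma GoodPair.mem_trivUp {K K' : Pt → Pt} (h : GoodPair K K') : K ∈ TrivUp := by
  have hbij : Function.Bijective K :=
    Function.bijective_iff_has_inverse.mpr ⟨K', h.inv2, h.inv1⟩
  have heucl : ∀ p, sqEucl (K p) = sqEucl p := by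
    intro p
    rw [sqEucl_eq, sqEucl_eq, h.time, h.dot]
  refine ⟨⟨⟨id, K, ⟨0, by intro p; simp⟩, h.lin, hbij, heucl, rfl⟩,
    vertical_of_fix h.lin h.fix_unitTime⟩, ?_⟩
  show K unitTime 0 > K 0 0
  rw [h.time]
  have : K (0 : Pt) = 0 := h.lin.map_zero
  rw [this]
  norm_num [unitTime]
lemma boost_decomp (x p : Pt) :
    boost x p = p + (((x 0 - 1) * p 0 + sdot x p) • unitTime + ((p 0 + sdot x p / (1 + x 0)) • x
      + (-((p 0 + sdot x p / (1 + x 0)) * x 0)) • unitTime)) := by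
  funext i
  fin_cases i <;>
    simp [boost, unitTime, Pi.add_apply, Pi.smul_apply, smul_eq_mul] <;> ring

lemma GoodPair.boost_conj {K K' : Pt → Pt} (h : GoodPair K K') (x p : Pt) :
    K (boost x (K' p)) = boost (K x) p := by
  have hx0 : K x 0 = x 0 := h.time x
  have hp0 : K' p 0 = p 0 := h.time' p
  have hsd : sdot x (K' p) = sdot (K x) p := by
    rw [← h.inv2 x, h.dot', h.inv1]
  rw [boost_decomp x (K' p), boost_decomp (K x) p]
  rw [h.lin.map_add, h.lin.map_add, h.lin.map_add, h.lin.map_smul, h.lin.map_smul,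
    h.lin.map_smul, h.inv1, h.fix_unitTime, hx0, hp0, hsd]
/-- Reflection across the hyperplane orthogonal to a spatial vector `u`. -/
noncomputable def reflPt (u : Pt) (p : Pt) : Pt := p + (-(2 * sdot u p / sdot u u)) • u

lemma reflPt_linear (u : Pt) : IsLinearMap ℝ (reflPt u) := by
  constructor
  · intro p q; funext i
    simp only [reflPt, sdot, Pi.add_apply, Pi.smul_apply, smul_eq_mul]
    by_cases hu : sdot u u = 0
    · simp only [sdot] at hu; rw [hu]; simp
    · simp only [sdot] at hu; field_simp; ring
  · intro c p; funext i
    simp only [reflPt, sdot, Pi.add_apply, Pi.smul_apply, smul_eq_mul]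
    by_cases hu : sdot u u = 0
    · simp only [sdot] at hu; rw [hu]; simp
    · simp only [sdot] at hu; field_simp

lemma reflPt_goodPair {u : Pt} (hu0 : u 0 = 0) (hu : sdot u u ≠ 0) :
    GoodPair (reflPt u) (reflPt u) := by
  have htime : ∀ p, reflPt u p 0 = p 0 := by
    intro p
    simp [reflPt, hu0]
  have hdot : ∀ p q, sdot (reflPt u p) (reflPt u q) = sdot p q := by
    intro p q
    simp only [reflPt, sdot, Pi.add_apply, Pi.smul_apply, smul_eq_mul] at *
    have hu' : u 1 ^ 2 + u 2 ^ 2 + u 3 ^ 2 ≠ 0 := by simpa only [pow_two] using hu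
    field_simp
    ring
  have hinv : ∀ p, reflPt u (reflPt u p) = p := by
    intro p
    funext i
    simp only [reflPt, sdot, Pi.add_apply, Pi.smul_apply, smul_eq_mul] at *
    have hu' : u 1 ^ 2 + u 2 ^ 2 + u 3 ^ 2 ≠ 0 := by simpa only [pow_two] using hu
    field_simp
    ring
  exact ⟨reflPt_linear u, reflPt_linear u, htime, hdot, hinv, hinv⟩

/-- There is a good pair carrying `y` to `x` whenever time components and spatial
norms agree. -/
lemma exists_goodPair_map (x y : Pt) (h0 : x 0 = y 0) (hs : sdot x x = sdot y y) :
    ∃ K K', GoodPair K K' ∧ K y = x := by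
  by_cases hxy : x = y
  · exact ⟨id, id, ⟨⟨fun _ _ => rfl, fun _ _ => rfl⟩, ⟨fun _ _ => rfl, fun _ _ => rfl⟩,
      fun _ => rfl, fun _ _ => rfl, fun _ => rfl, fun _ => rfl⟩, hxy.symm⟩
  · set u : Pt := y - x with hu_def
    have hu0 : u 0 = 0 := by simp [hu_def, h0]
    have huu : sdot u u ≠ 0 := by
      intro hz
      apply hxy
      have h1 : u 1 = 0 ∧ u 2 = 0 ∧ u 3 = 0 := by
        simp only [sdot] at hz
        refine ⟨?_, ?_, ?_⟩ <;> nlinarith [sq_nonneg (u 1), sq_nonneg (u 2), sq_nonneg (u 3)]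
      funext i
      have e : ∀ j : Fin 4, u j = y j - x j := fun j => rfl
      fin_cases i
      · show x 0 = y 0; exact h0
      · show x 1 = y 1; have := h1.1; rw [e 1] at this; linarith
      · show x 2 = y 2; have := h1.2.1; rw [e 2] at this; linarith
      · show x 3 = y 3; have := h1.2.2; rw [e 3] at this; linarith
    refine ⟨reflPt u, reflPt u, reflPt_goodPair hu0 huu, ?_⟩
    have key : 2 * sdot u y = sdot u u := by
      simp only [sdot, hu_def, Pi.sub_apply]
      simp only [sdot] at hs
      linarith
    have hcoef : 2 * sdot u y / sdot u u = 1 := by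
      rw [key]; field_simp
    funext i
    have : reflPt u y i = y i + (-(2 * sdot u y / sdot u u)) * u i := rfl
    rw [this, hcoef]
    have e : u i = y i - x i := rfl
    rw [e]; ring
/-- Rotation in the 1-2 plane. -/
def rotPt (v w : ℝ) (p : Pt) : Pt := fun i =>
  if i = 0 then p 0 else if i = 1 then v * p 1 - w * p 2 else if i = 2 then w * p 1 + v * p 2
  else p 3

lemma rotPt_apply_zero (v w : ℝ) (p : Pt) : rotPt v w p 0 = p 0 := rfl
lemma rotPt_apply_one (v w : ℝ) (p : Pt) : rotPt v w p 1 = v * p 1 - w * p 2 := rfl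
lemma rotPt_apply_two (v w : ℝ) (p : Pt) : rotPt v w p 2 = w * p 1 + v * p 2 := rfl
lemma rotPt_apply_three (v w : ℝ) (p : Pt) : rotPt v w p 3 = p 3 := rfl

lemma rotPt_linear (a b : ℝ) : IsLinearMap ℝ (rotPt a b) := by
  constructor
  · intro p q; funext i
    fin_cases i
    · show rotPt a b (p + q) 0 = (rotPt a b p + rotPt a b q) 0
      rw [Pi.add_apply, rotPt_apply_zero, rotPt_apply_zero, rotPt_apply_zero, Pi.add_apply]
    · show rotPt a b (p + q) 1 = (rotPt a b p + rotPt a b q) 1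
      rw [Pi.add_apply, rotPt_apply_one, rotPt_apply_one, rotPt_apply_one]
      simp only [Pi.add_apply]
      ring
    · show rotPt a b (p + q) 2 = (rotPt a b p + rotPt a b q) 2
      rw [Pi.add_apply, rotPt_apply_two, rotPt_apply_two, rotPt_apply_two]
      simp only [Pi.add_apply]
      ring
    · show rotPt a b (p + q) 3 = (rotPt a b p + rotPt a b q) 3
      rw [Pi.add_apply, rotPt_apply_three, rotPt_apply_three, rotPt_apply_three, Pi.add_apply]
  · intro c p; funext i
    fin_cases i
    · show rotPt a b (c • p) 0 = (c • rotPt a b p) 0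
      rw [Pi.smul_apply, rotPt_apply_zero, rotPt_apply_zero, Pi.smul_apply]
    · show rotPt a b (c • p) 1 = (c • rotPt a b p) 1
      rw [Pi.smul_apply, rotPt_apply_one, rotPt_apply_one, Pi.smul_apply, Pi.smul_apply,
        smul_eq_mul, smul_eq_mul, smul_eq_mul]
      ring
    · show rotPt a b (c • p) 2 = (c • rotPt a b p) 2
      rw [Pi.smul_apply, rotPt_apply_two, rotPt_apply_two, Pi.smul_apply, Pi.smul_apply,
        smul_eq_mul, smul_eq_mul, smul_eq_mul]
      ring
    · show rotPt a b (c • p) 3 = (c • rotPt a b p) 3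
      rw [Pi.smul_apply, rotPt_apply_three, rotPt_apply_three, Pi.smul_apply]

lemma rotPt_goodPair {v w : ℝ} (hvw : v ^ 2 + w ^ 2 = 1) :
    GoodPair (rotPt v w) (rotPt v (-w)) := by
  have hinv : ∀ (a b : ℝ), a ^ 2 + b ^ 2 = 1 → ∀ p, rotPt a b (rotPt a (-b) p) = p := by
    intro a b hab p; funext i
    fin_cases i
    · show rotPt a b (rotPt a (-b) p) 0 = p 0
      rw [rotPt_apply_zero, rotPt_apply_zero]
    · show rotPt a b (rotPt a (-b) p) 1 = p 1
      rw [rotPt_apply_one, rotPt_apply_one, rotPt_apply_two]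
      linear_combination p 1 * hab
    · show rotPt a b (rotPt a (-b) p) 2 = p 2
      rw [rotPt_apply_two, rotPt_apply_one, rotPt_apply_two]
      linear_combination p 2 * hab
    · show rotPt a b (rotPt a (-b) p) 3 = p 3
      rw [rotPt_apply_three, rotPt_apply_three]
  refine ⟨rotPt_linear v w, rotPt_linear v (-w), fun p => rfl, ?_, hinv v w hvw, ?_⟩
  · intro p q
    simp only [sdot, rotPt_apply_one, rotPt_apply_two, rotPt_apply_three]
    linear_combination (p 1 * q 1 + p 2 * q 2) * hvw
  · intro p
    have := hinv v (-w) (by nlinarith) p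
    simpa using this
/-- A Lorentz transformation fixing `unitTime` is an orthochronous trivial
transformation. -/
lemma fix_unitTime_trivUp {L : Pt → Pt} (hL : IsLorentz L) (he : L unitTime = unitTime) :
    L ∈ TrivUp := by
  obtain ⟨hlin, hbij, hmink⟩ := hL
  have htime : ∀ p, L p 0 = p 0 := by
    intro p
    have := mdot_preserved hlin hmink p unitTime
    rwa [he, mdot_unitTime, mdot_unitTime] at this
  have heucl : ∀ p, sqEucl (L p) = sqEucl p := by
    intro p
    have h1 : sqEucl (L p) = 2 * (L p 0) ^ 2 - sqMink (L p) := by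
      rw [sqEucl_eq, sqMink_eq]; ring
    rw [h1, htime, hmink, sqEucl_eq, sqMink_eq]; ring
  refine ⟨⟨⟨id, L, ⟨0, by intro p; simp⟩, hlin, hbij, heucl, rfl⟩,
    vertical_of_fix hlin he⟩, ?_⟩
  show L unitTime 0 > L 0 0
  rw [htime, htime]
  norm_num [unitTime]

/-- Translations are orthochronous trivial transformations. -/
lemma translation_mem_trivUp (b : Pt) : (fun p => p + b) ∈ TrivUp := by
  constructor
  · constructor
    · exact ⟨fun p => p + b, id, ⟨b, fun p => rfl⟩, ⟨fun _ _ => rfl, fun _ _ => rfl⟩,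
        Function.bijective_id, fun p => rfl, rfl⟩
    · rintro ℓ ⟨q, rfl⟩
      refine ⟨q + b, ?_⟩
      ext r
      constructor
      · rintro ⟨p, hp, rfl⟩
        simp only [Set.mem_setOf_eq, Pi.add_apply] at hp ⊢
        exact ⟨by rw [hp.1], by rw [hp.2.1], by rw [hp.2.2]⟩
      · intro hr
        simp only [Set.mem_setOf_eq, Pi.add_apply] at hr ⊢
        refine ⟨r - b, ⟨?_, ?_, ?_⟩, by funext i; simp⟩ <;>
          simp only [Pi.sub_apply] <;> linarith [hr.1, hr.2.1, hr.2.2]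
  · show (unitTime + b) 0 > ((0 : Pt) + b) 0
    simp [unitTime]

lemma IsLorentz.comp {L M : Pt → Pt} (hL : IsLorentz L) (hM : IsLorentz M) :
    IsLorentz (L ∘ M) := by
  obtain ⟨l1, l2, l3⟩ := hL
  obtain ⟨m1, m2, m3⟩ := hM
  exact ⟨⟨fun p q => by simp [Function.comp, m1.map_add, l1.map_add],
    fun c p => by simp [Function.comp, m1.map_smul, l1.map_smul]⟩,
    l2.comp m2, fun p => by simp [Function.comp, l3, m3]⟩
lemma unitTime_zero : unitTime 0 = (1 : ℝ) := rfl
lemma unitTime_one : unitTime 1 = (0 : ℝ) := rfl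
lemma unitTime_two : unitTime 2 = (0 : ℝ) := rfl
lemma unitTime_three : unitTime 3 = (0 : ℝ) := rfl

lemma sqMink_unitTime : sqMink unitTime = 1 := by
  rw [sqMink, unitTime_zero, unitTime_one, unitTime_two, unitTime_three]; norm_num

/-- From a Lorentz map in `G`, extract the standard boost with the same image
of `unitTime`. -/
lemma extract_boost {G : Set (Pt → Pt)} (hG : IsCompGroup G) (hTG : TrivUp ⊆ G)
    (hGP : G ⊆ PoiUp) {L : Pt → Pt} (hLG : L ∈ G) (hL : IsLorentz L) :
    boost (L unitTime) ∈ G ∧ 1 ≤ L unitTime 0 ∧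
      sdot (L unitTime) (L unitTime) = (L unitTime) 0 ^ 2 - 1 := by
  set x := L unitTime with hxdef
  have hx : sqMink x = 1 := by rw [hxdef, hL.2.2, sqMink_unitTime]
  have hxs : sdot x x = x 0 ^ 2 - 1 := by
    have := sqMink_eq x; linarith
  have hpos : 0 < x 0 := by
    have horth : Orthochronous L := (hGP hLG).2
    have hz : L 0 = 0 := hL.1.map_zero
    have : L 0 0 = 0 := by rw [hz]; rfl
    rw [Orthochronous] at horth
    rw [hxdef]; linarith
  have hx0 : 1 ≤ x 0 := by nlinarith [sdot_self_nonneg x]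
  refine ⟨?_, hx0, hxs⟩
  have hfx0 : (1 : ℝ) ≤ xflip x 0 := hx0
  have hfxs : sdot (xflip x) (xflip x) = (xflip x) 0 ^ 2 - 1 := by
    rw [sdot_xflip, xflip_zero, hxs]
  have hMlor : IsLorentz (boost (xflip x) ∘ L) :=
    (boost_lorentz hfx0 hfxs).comp hL
  have hMe : (boost (xflip x) ∘ L) unitTime = unitTime := by
    show boost (xflip x) (L unitTime) = unitTime
    rw [← hxdef]
    have h := boost_xflip_boost hx0 hxs unitTime
    rwa [boost_unitTime] at h
  have hMG : (boost (xflip x) ∘ L) ∈ G := hTG (fix_unitTime_trivUp hMlor hMe)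
  obtain ⟨M', hM'G, h1, h2⟩ := hG.2.2 _ hMG
  have hcomp : boost x ∘ (boost (xflip x) ∘ L) = L := by
    funext p
    exact boost_boost_xflip hx0 hxs (L p)
  have : boost x = L ∘ M' := by
    calc boost x = boost x ∘ id := rfl
    _ = boost x ∘ ((boost (xflip x) ∘ L) ∘ M') := by rw [h1]
    _ = (boost x ∘ (boost (xflip x) ∘ L)) ∘ M' := rfl
    _ = L ∘ M' := by rw [hcomp]
  rw [this]
  exact hG.2.1 L hLG M' hM'G

/-- The achievable Lorentz factors. -/
def Ach (G : Set (Pt → Pt)) (c : ℝ) : Prop :=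
  ∃ x : Pt, x 0 = c ∧ sdot x x = c ^ 2 - 1 ∧ boost x ∈ G

lemma boost_unitTime_eq_id : boost unitTime = id := by
  funext p
  funext i
  fin_cases i
  · show boost unitTime p 0 = p 0
    rw [boost_apply_zero, unitTime_sdot, unitTime_zero]; ring
  · show boost unitTime p 1 = p 1
    rw [boost_apply_one, unitTime_sdot, unitTime_one]; ring
  · show boost unitTime p 2 = p 2
    rw [boost_apply_two, unitTime_sdot, unitTime_two]; ring
  · show boost unitTime p 3 = p 3
    rw [boost_apply_three, unitTime_sdot, unitTime_three]; ring

lemma ach_one {G : Set (Pt → Pt)} (hG : IsCompGroup G) : Ach G 1 := by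
  refine ⟨unitTime, rfl, ?_, ?_⟩
  · rw [sdot, unitTime_one, unitTime_two, unitTime_three]; norm_num
  · rw [boost_unitTime_eq_id]; exact hG.1

/-- Conjugating a boost in `G` by a good pair stays in `G`. -/
lemma boost_conj_mem {G : Set (Pt → Pt)} (hG : IsCompGroup G) (hTG : TrivUp ⊆ G)
    {x : Pt} {K K' : Pt → Pt} (hg : GoodPair K K')
    (hb : boost x ∈ G) : boost (K x) ∈ G := by
  have : boost (K x) = K ∘ (boost x ∘ K') := by
    funext p
    exact (hg.boost_conj x p).symm
  rw [this]
  exact hG.2.1 K (hTG hg.mem_trivUp) _ (hG.2.1 _ hb K' (hTG hg.symm.mem_trivUp))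
lemma ach_gamma_pos {G : Set (Pt → Pt)} (hGP : G ⊆ PoiUp) {γ : ℝ} (h : Ach G γ) :
    1 ≤ γ := by
  obtain ⟨x, hx0, hxs, hxG⟩ := h
  have horth : Orthochronous (boost x) := (hGP hxG).2
  have hz : boost x 0 0 = 0 := by rw [(boost_linear x).map_zero]; rfl
  have he : boost x unitTime 0 = γ := by rw [boost_unitTime, hx0]
  rw [Orthochronous, he, hz] at horth
  nlinarith [sdot_self_nonneg x, hxs]

lemma ach_closure {G : Set (Pt → Pt)} (hG : IsCompGroup G) (hTG : TrivUp ⊆ G)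
    (hGP : G ⊆ PoiUp) {γ : ℝ} (h : Ach G γ) {c : ℝ} (hc1 : 1 ≤ c)
    (hc2 : c ≤ 2 * γ ^ 2 - 1) : Ach G c := by
  have hγ1 : 1 ≤ γ := ach_gamma_pos hGP h
  rcases eq_or_lt_of_le hγ1 with hγ | hγ
  · have : c = 1 := by nlinarith
    rw [this]; exact ach_one hG
  obtain ⟨x, hx0, hxs, hxG⟩ := h
  set r2 : ℝ := γ ^ 2 - 1 with hr2def
  have hr2pos : 0 < r2 := by nlinarith
  set r : ℝ := Real.sqrt r2 with hrdef
  have hrsq : r * r = r2 := Real.mul_self_sqrt (le_of_lt hr2pos)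
  set x1 : Pt := (fun i => if i = 0 then γ else if i = 1 then r else 0) with hx1def
  have e10 : x1 0 = γ := rfl
  have e11 : x1 1 = r := rfl
  have e12 : x1 2 = 0 := rfl
  have e13 : x1 3 = 0 := rfl
  have hs1 : sdot x1 x1 = γ ^ 2 - 1 := by
    rw [sdot, e11, e12, e13, hrsq]; ring
  -- move the boost to the x-axis
  obtain ⟨K, K', hg, hKy⟩ := exists_goodPair_map x1 x (by rw [e10, hx0]) (by rw [hs1, hxs])
  have hb1 : boost x1 ∈ G := by
    have := boost_conj_mem hG hTG hg hxG
    rwa [hKy] at this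
  -- rotate it
  set v : ℝ := (c - γ ^ 2) / r2 with hvdef
  have hv1 : -1 ≤ v := by
    rw [hvdef, le_div_iff₀ hr2pos]; nlinarith
  have hv2 : v ≤ 1 := by
    rw [hvdef, div_le_one hr2pos]; nlinarith
  set w : ℝ := Real.sqrt (1 - v ^ 2) with hwdef
  have hw2 : w ^ 2 = 1 - v ^ 2 := Real.sq_sqrt (by nlinarith)
  have hvw : v ^ 2 + w ^ 2 = 1 := by rw [hw2]; ring
  have hg2 := rotPt_goodPair hvw
  set x2 : Pt := rotPt v w x1 with hx2def
  have hb2 : boost x2 ∈ G := boost_conj_mem hG hTG hg2 hb1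
  have e20 : x2 0 = γ := by rw [hx2def, rotPt_apply_zero, e10]
  have e21 : x2 1 = v * r := by rw [hx2def, rotPt_apply_one, e11, e12]; ring
  have e22 : x2 2 = w * r := by rw [hx2def, rotPt_apply_two, e11, e12]; ring
  have e23 : x2 3 = 0 := by rw [hx2def, rotPt_apply_three, e13]
  have hs2 : sdot x2 x2 = γ ^ 2 - 1 := by
    rw [sdot, e21, e22, e23]
    have : v * r * (v * r) + w * r * (w * r) = (v ^ 2 + w ^ 2) * (r * r) := by ring
    rw [this, hvw, hrsq]; ring
  -- compose the two boosts
  have hlor1 : IsLorentz (boost x1) := boost_lorentz (by rw [e10]; linarith) (by rw [e10]; exact hs1)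
  have hlor2 : IsLorentz (boost x2) := boost_lorentz (by rw [e20]; linarith) (by rw [e20]; exact hs2)
  set M : Pt → Pt := boost x1 ∘ boost x2 with hMdef
  have hMG : M ∈ G := hG.2.1 _ hb1 _ hb2
  have hMlor : IsLorentz M := hlor1.comp hlor2
  have hMtime : M unitTime 0 = c := by
    show boost x1 (boost x2 unitTime) 0 = c
    rw [boost_unitTime, boost_apply_zero, e10, e20, sdot, e11, e12, e13, e21]
    have : γ * γ + (r * (v * r) + 0 * x2 2 + 0 * x2 3) = γ ^ 2 + v * (r * r) := by ring
    rw [this, hrsq, hvdef]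
    field_simp
    ring
  obtain ⟨hbM, _, hsM⟩ := extract_boost hG hTG hGP hMG hMlor
  exact ⟨M unitTime, hMtime, by rw [← hMtime]; exact hsM, hbM⟩
lemma fix_unitTime_trivUp' {L : Pt → Pt} (hL : IsLorentz L) (he : L unitTime = unitTime)
    (b : Pt) : ((fun p => p + b) ∘ L) ∈ TrivUp := by
  obtain ⟨hlin, hbij, hmink⟩ := hL
  have htime : ∀ p, L p 0 = p 0 := by
    intro p
    have := mdot_preserved hlin hmink p unitTime
    rwa [he, mdot_unitTime, mdot_unitTime] at this
  have heucl : ∀ p, sqEucl (L p) = sqEucl p := by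
    intro p
    have h1 : sqEucl (L p) = 2 * (L p 0) ^ 2 - sqMink (L p) := by
      rw [sqEucl_eq, sqMink_eq]; ring
    rw [h1, htime, hmink, sqEucl_eq, sqMink_eq]; ring
  have hvert := vertical_of_fix hlin he
  refine ⟨⟨⟨fun p => p + b, L, ⟨b, fun p => rfl⟩, hlin, hbij, heucl, rfl⟩, ?_⟩, ?_⟩
  · intro ℓ hℓ
    have h1 : (fun p => p + b) '' (L '' ℓ) = ((fun p => p + b) ∘ L) '' ℓ := by
      rw [Set.image_image]; rfl
    rw [← h1]
    have h2 := hvert ℓ hℓ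
    have h3 := (translation_mem_trivUp b).1.2 _ h2
    exact h3
  · show (L unitTime + b) 0 > (L 0 + b) 0
    rw [Pi.add_apply, Pi.add_apply, he, hlin.map_zero, unitTime_zero]
    show 1 + b 0 > (0 : Pt) 0 + b 0
    norm_num

lemma ach_all {G : Set (Pt → Pt)} (hG : IsCompGroup G) (hTG : TrivUp ⊆ G)
    (hGP : G ⊆ PoiUp) {γ0 : ℝ} (h0 : Ach G γ0) (hγ0 : 1 < γ0) :
    ∀ c, 1 ≤ c → Ach G c := by
  have key : ∀ n : ℕ, ∃ γ, Ach G γ ∧ 1 + 4 ^ n * (γ0 - 1) ≤ γ := by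
    intro n
    induction n with
    | zero => exact ⟨γ0, h0, by norm_num⟩
    | succ n ih =>
      obtain ⟨γ, hach, hge⟩ := ih
      have hγ1 : 1 ≤ γ := ach_gamma_pos hGP hach
      have h4 : (0 : ℝ) < 4 ^ n := by positivity
      refine ⟨2 * γ ^ 2 - 1, ach_closure hG hTG hGP hach (by nlinarith) le_rfl, ?_⟩
      have : (4 : ℝ) ^ (n + 1) = 4 * 4 ^ n := by ring
      rw [this]
      nlinarith
  intro c hc
  obtain ⟨n, hn⟩ := pow_unbounded_of_one_lt ((c - 1) / (γ0 - 1)) (by norm_num : (1:ℝ) < 4)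
  obtain ⟨γ, hach, hge⟩ := key n
  have hγ0' : 0 < γ0 - 1 := by linarith
  have hcγ : c ≤ γ := by
    rw [div_lt_iff₀ hγ0'] at hn
    nlinarith
  have hγ1 : 1 ≤ γ := ach_gamma_pos hGP hach
  exact ach_closure hG hTG hGP hach hc (by nlinarith)

lemma poiUp_subset {G : Set (Pt → Pt)} (hG : IsCompGroup G) (hTG : TrivUp ⊆ G)
    (hGP : G ⊆ PoiUp) (hall : ∀ c, 1 ≤ c → Ach G c) : PoiUp ⊆ G := by
  rintro P ⟨⟨τ, L, ⟨b, hb⟩, hL, rfl⟩, horth⟩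
  set y := L unitTime with hydef
  have hy : sqMink y = 1 := by rw [hydef, hL.2.2, sqMink_unitTime]
  have hyS : sdot y y = y 0 ^ 2 - 1 := by have := sqMink_eq y; linarith
  have hypos : 0 < y 0 := by
    rw [Orthochronous] at horth
    have h1 : (τ ∘ L) unitTime 0 = y 0 + b 0 := by
      show τ (L unitTime) 0 = y 0 + b 0
      rw [hb]; rfl
    have h2 : (τ ∘ L) 0 0 = b 0 := by
      show τ (L 0) 0 = b 0
      rw [hL.1.map_zero, hb]
      show ((0 : Pt) + b) 0 = b 0
      simp
    rw [h1, h2] at horth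
    linarith
  have hy1 : 1 ≤ y 0 := by nlinarith [sdot_self_nonneg y]
  obtain ⟨x, hx0, hxs, hxG⟩ := hall (y 0) hy1
  obtain ⟨K, K', hg, hKx⟩ := exists_goodPair_map y x (by rw [hx0]) (by rw [hxs, hyS])
  have hby : boost y ∈ G := by
    have := boost_conj_mem hG hTG hg hxG
    rwa [hKx] at this
  -- L = boost y ∘ M with M ∈ TrivUp
  have hfy0 : (1 : ℝ) ≤ xflip y 0 := hy1
  have hfys : sdot (xflip y) (xflip y) = (xflip y) 0 ^ 2 - 1 := by
    rw [sdot_xflip, xflip_zero, hyS]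
  have hMlor : IsLorentz (boost (xflip y) ∘ L) := (boost_lorentz hfy0 hfys).comp hL
  have hMe : (boost (xflip y) ∘ L) unitTime = unitTime := by
    show boost (xflip y) (L unitTime) = unitTime
    rw [← hydef]
    have h := boost_xflip_boost hy1 hyS unitTime
    rwa [boost_unitTime] at h
  have hMG : (boost (xflip y) ∘ L) ∈ G := hTG (fix_unitTime_trivUp hMlor hMe)
  have hLG : L ∈ G := by
    have hcomp : boost y ∘ (boost (xflip y) ∘ L) = L := by
      funext p
      exact boost_boost_xflip hy1 hyS (L p)
    rw [← hcomp]
    exact hG.2.1 _ hby _ hMG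
  have hτG : τ ∈ G := by
    have : τ = fun p => p + b := funext hb
    rw [this]
    exact hTG (translation_mem_trivUp b)
  exact hG.2.1 τ hτG L hLG
/-- **Corollary of Borisov's theorem.** There is no group (under composition) of
functions from ℝ⁴ to ℝ⁴ lying strictly between Triv↑ and Poi↑. -/
theorem no_group_between_trivUp_poiUp :
    ¬ ∃ G : Set (Pt → Pt), IsCompGroup G ∧ TrivUp ⊂ G ∧ G ⊂ PoiUp := by
  rintro ⟨G, hGrp, hT, hP⟩
  have hTG : TrivUp ⊆ G := hT.subset
  have hGP : G ⊆ PoiUp := hP.subset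
  obtain ⟨P, hPG, hPnT⟩ := Set.not_subset.mp hT.not_subset
  obtain ⟨τ, L0, ⟨b, hb⟩, hL0, hPeq⟩ := (hGP hPG).1
  have hτinv : (fun p : Pt => p + (-b)) ∈ G := hTG (translation_mem_trivUp (-b))
  have hL0G : L0 ∈ G := by
    have hc : (fun p : Pt => p + (-b)) ∘ P = L0 := by
      funext p
      show P p + (-b) = L0 p
      rw [hPeq]
      show τ (L0 p) + (-b) = L0 p
      rw [hb]
      abel
    rw [← hc]
    exact hGrp.2.1 _ hτinv P hPG
  set y := L0 unitTime with hydef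
  have hy : sqMink y = 1 := by rw [hydef, hL0.2.2, sqMink_unitTime]
  have hyS : sdot y y = y 0 ^ 2 - 1 := by have := sqMink_eq y; linarith
  have hypos : 0 < y 0 := by
    have horth : Orthochronous P := (hGP hPG).2
    rw [Orthochronous, hPeq] at horth
    have h1 : (τ ∘ L0) unitTime 0 = y 0 + b 0 := by
      show τ (L0 unitTime) 0 = y 0 + b 0
      rw [hb]; rfl
    have h2 : (τ ∘ L0) 0 0 = b 0 := by
      show τ (L0 0) 0 = b 0
      rw [hL0.1.map_zero, hb]
      show ((0 : Pt) + b) 0 = b 0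
      simp
    rw [h1, h2] at horth
    linarith
  have hy1 : 1 ≤ y 0 := by nlinarith [sdot_self_nonneg y]
  have hyne : y 0 ≠ 1 := by
    intro h1
    apply hPnT
    have hsp : sdot y y = 0 := by rw [hyS, h1]; ring
    have hye : L0 unitTime = unitTime := by
      rw [← hydef]
      simp only [sdot] at hsp
      funext i
      fin_cases i
      · show y 0 = unitTime 0
        rw [h1, unitTime_zero]
      · show y 1 = unitTime 1
        rw [unitTime_one]
        nlinarith [sq_nonneg (y 1), sq_nonneg (y 2), sq_nonneg (y 3)]
      · show y 2 = unitTime 2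
        rw [unitTime_two]
        nlinarith [sq_nonneg (y 1), sq_nonneg (y 2), sq_nonneg (y 3)]
      · show y 3 = unitTime 3
        rw [unitTime_three]
        nlinarith [sq_nonneg (y 1), sq_nonneg (y 2), sq_nonneg (y 3)]
    have hτb : τ ∘ L0 = (fun p : Pt => p + b) ∘ L0 := by
      funext p
      show τ (L0 p) = L0 p + b
      rw [hb]
    rw [hPeq, hτb]
    exact fix_unitTime_trivUp' hL0 hye b
  have hygt : 1 < y 0 := lt_of_le_of_ne hy1 (Ne.symm hyne)
  obtain ⟨hbG, _, hsG⟩ := extract_boost hGrp hTG hGP hL0G hL0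
  have hach : Ach G (y 0) := ⟨L0 unitTime, rfl, hsG, hbG⟩
  exact hP.not_subset (poiUp_subset hGrp hTG hGP (ach_all hGrp hTG hGP hach hygt))
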